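/- Let Π be a profinite group, Γ ⊴ Π a closed normal subgroup with quotient p : Π → π, and suppose p admits a continuous section. Let G be a finite group and X a right torsor under the constant group G in continuous Π-sets, with associated homomorphism θ : Π → G' = Aut_G(X) assumed surjective. Then X is isomorphic, as a right G-torsor in Π-sets, to a contracted product Y ∧ Z where: Z is a right G-torsor in Π-sets on which Γ acts trivially (i.e. Z comes from a π-set), and Y is a bitorsor whose class comes by extension of structure group from a torsor under a quotient of Γ whose underlying group embeds into G. -/

import Mathlib

/-- dévissage theorem: let `P` be a profinite group, `p : P → π` a continuous
surjection (with closed normal kernel `Γ = ker p`) admitting a continuous homomorphic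
section `s`, `G` a finite group and `X` a right torsor under the constant group `G` in
continuous `P`-sets, with `P`-action `ρ : P →* Perm X` commuting with the `G`-action;
assume the associated homomorphism `θ : P → G' = Aut_G(X)` is surjective (i.e. every
`G`-equivariant permutation of `X` is some `ρ σ`).  Then `X` decomposes as a contracted
product `Y ∧ Z`: there is a second continuous `P`-action `ρ'` on `X`, still commuting with
the `G`-action (defining the torsor `Z`, with the same underlying `G`-torsor as `X`), on
which `Γ` acts trivially (so `Z` comes from a `π`-set), and the bitorsor
`Y = Isom_G(Z, X)` (the `G`-equivariant permutations of `X`, with `P` acting by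
`σ·f = ρ(σ) ∘ f ∘ ρ'(σ)⁻¹`) is induced from a torsor `W` under the subgroup
`H' = θ(Γ) = ρ(Γ)` of `Aut_G(X)` — a `P`-stable, `H'`-stable and `H'`-transitive nonempty
set of equivariant permutations — where `Aut_G(X)` (hence `H'`, a quotient of `Γ`) embeds
into `G`. -/
theorem devissage_of_constant_torsor
    {P Pi G X : Type*}
    [Group P] [TopologicalSpace P] [IsTopologicalGroup P]
    [CompactSpace P] [TotallyDisconnectedSpace P]
    [Group Pi] [TopologicalSpace Pi] [IsTopologicalGroup Pi]
    [CompactSpace Pi] [TotallyDisconnectedSpace Pi]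
    [Group G] [Finite G]
    (p : P →* Pi) (hpsurj : Function.Surjective p) (hpcont : Continuous p)
    (s : Pi →* P) (hscont : Continuous s) (hsect : ∀ y : Pi, p (s y) = y)
    (ρ : P →* Equiv.Perm X) (hρcont : ∀ x y : X, IsOpen {σ : P | ρ σ x = y})
    (r : X → G → X) (hne : Nonempty X)
    (r_one : ∀ x, r x 1 = x) (r_mul : ∀ x g h, r x (g * h) = r (r x g) h)
    (r_free_trans : ∀ x y, ∃! g, r x g = y)
    (hcomm : ∀ σ x g, ρ σ (r x g) = r (ρ σ x) g)
    (hθsurj : ∀ f : Equiv.Perm X, (∀ x g, f (r x g) = r (f x) g) → ∃ σ : P, ρ σ = f) :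
    ∃ ρ' : P →* Equiv.Perm X,
      (∀ x y : X, IsOpen {σ : P | ρ' σ x = y}) ∧
      (∀ σ x g, ρ' σ (r x g) = r (ρ' σ x) g) ∧
      (∀ γ ∈ p.ker, ρ' γ = 1) ∧
      (∃ W : Set (Equiv.Perm X),
        W.Nonempty ∧
        (∀ f ∈ W, ∀ x g, f (r x g) = r (f x) g) ∧
        (∀ σ : P, ∀ f ∈ W, ρ σ * f * (ρ' σ)⁻¹ ∈ W) ∧
        (∀ f ∈ W, ∀ γ ∈ p.ker, ρ γ * f ∈ W) ∧
        (∀ f ∈ W, ∀ f' ∈ W, ∃ γ ∈ p.ker, f' = ρ γ * f)) ∧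
      (∃ j : Equiv.Perm X → G,
        (∀ f f' : Equiv.Perm X, (∀ x g, f (r x g) = r (f x) g) →
          (∀ x g, f' (r x g) = r (f' x) g) → j (f * f') = j f * j f') ∧
        (∀ f f' : Equiv.Perm X, (∀ x g, f (r x g) = r (f x) g) →
          (∀ x g, f' (r x g) = r (f' x) g) → j f = j f' → f = f')) := by
  classical
  refine ⟨ρ.comp (s.comp p), ?_, ?_, ?_, ?_, ?_⟩
  · intro x y
    have : {σ : P | (ρ.comp (s.comp p)) σ x = y} = (fun σ => s (p σ)) ⁻¹' {τ | ρ τ x = y} := rfl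
    rw [this]
    exact (hρcont x y).preimage (hscont.comp hpcont)
  · intro σ x g; exact hcomm _ x g
  · intro γ hγ
    have : p γ = 1 := hγ
    simp [MonoidHom.comp_apply, this]
  · refine ⟨{f | (∀ x g, f (r x g) = r (f x) g) ∧ ∃ γ ∈ p.ker, f = ρ γ}, ?_, ?_, ?_, ?_, ?_⟩
    · exact ⟨ρ 1, by simp [hcomm], 1, by simp [MonoidHom.mem_ker], rfl⟩
    · exact fun f hf => hf.1
    · rintro σ f ⟨hfeq, γ, hγ, rfl⟩
      refine ⟨?_, σ * γ * (s (p σ))⁻¹, ?_, ?_⟩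
      · intro x g
        simp only [Equiv.Perm.mul_apply]
        have h1 : ∀ (τ : P) (x : X) g, (ρ τ)⁻¹ (r x g) = r ((ρ τ)⁻¹ x) g := by
          intro τ x g
          have := hcomm τ ((ρ τ)⁻¹ x) g
          apply (ρ τ).injective
          simp only [Equiv.Perm.inv_def, Equiv.apply_symm_apply] at this ⊢
          rw [hcomm, Equiv.apply_symm_apply]
        calc ρ σ (ρ γ ((ρ.comp (s.comp p) σ)⁻¹ (r x g)))
            = ρ σ (ρ γ (r ((ρ.comp (s.comp p) σ)⁻¹ x) g)) := by
              rw [show (ρ.comp (s.comp p) σ)⁻¹ = (ρ (s (p σ)))⁻¹ from rfl, h1]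
          _ = r (ρ σ (ρ γ ((ρ.comp (s.comp p) σ)⁻¹ x))) g := by rw [hcomm, hcomm]
      · have hγ1 : p γ = 1 := hγ
        simp [MonoidHom.mem_ker, hsect, hγ1]
      · simp [mul_assoc]
    · rintro f ⟨hfeq, γ, hγ, rfl⟩ γ' hγ'
      exact ⟨fun x g => by simp only [Equiv.Perm.mul_apply, hcomm], γ' * γ,
        mul_mem hγ' hγ, by simp⟩
    · rintro f ⟨hfeq, γ, hγ, rfl⟩ f' ⟨hfeq', γ', hγ', rfl⟩
      exact ⟨γ' * γ⁻¹, mul_mem hγ' (inv_mem hγ), by simp⟩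
  · obtain ⟨x₀⟩ := hne
    refine ⟨fun f => (r_free_trans x₀ (f x₀)).choose, ?_, ?_⟩
    · intro f f' hf hf'
      have h' := (r_free_trans x₀ (f' x₀)).choose_spec.1
      have h := (r_free_trans x₀ (f x₀)).choose_spec.1
      refine ((r_free_trans x₀ ((f * f') x₀)).choose_spec.2 _ ?_).symm
      dsimp only
      rw [Equiv.Perm.mul_apply, r_mul, h, ← hf, h']
    · intro f f' hf hf' hj
      have h := (r_free_trans x₀ (f x₀)).choose_spec.1
      have h' := (r_free_trans x₀ (f' x₀)).choose_spec.1
      dsimp only at hj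
      have hx : f x₀ = f' x₀ := by rw [← h, hj, h']
      apply Equiv.ext
      intro y
      obtain ⟨g, hg, -⟩ := r_free_trans x₀ y
      rw [← hg, hf, hf', hx]
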